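/- Let A, B : I^n → I be standardized functions with A ≤ B and fix an integer k with 1 ≤ k ≤ n. Suppose at least one of the functions A and B satisfies Condition S with some countable set S ⊆ [0,1]. Then the following are equivalent: (i) there exists a k-increasing function C : I^n → I such that A ≤ C ≤ B; (ii) L_k^{(A,B)}(DU) ≥ 0 for all DU ∈ R_k(I^n). -/

import Mathlib

open scoped Classical BigOperators

namespace KIncr

/-- Points of the ambient space `ℝ^n`. -/
abbrev Pt (n : ℕ) := Fin n → ℝ

/-- Membership in the unit cube `I^n = [0,1]^n`. -/
def inCube {n : ℕ} (x : Pt n) : Prop := ∀ i, x i ∈ Set.Icc (0:ℝ) 1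

/-- The unit cube as a set. -/
def cubeSet (n : ℕ) : Set (Pt n) := {x | inCube x}

/-- Vertices of the unit cube `I^n`. -/
def isCubeVertex {n : ℕ} (x : Pt n) : Prop := ∀ i, x i = 0 ∨ x i = 1

/-- A (formal) box, given by its lower-left and upper-right corners. -/
structure Box (n : ℕ) where
  lo : Pt n
  hi : Pt n

/-- `R` is a `k`-box in `I^n`: exactly `k` coordinates are nondegenerate. -/
def Box.IsKBox {n : ℕ} (k : ℕ) (R : Box n) : Prop :=
  inCube R.lo ∧ inCube R.hi ∧ (∀ i, R.lo i ≤ R.hi i) ∧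
    (Finset.univ.filter (fun i => R.lo i < R.hi i)).card = k

/-- `v` is a vertex of the box `R`. -/
def Box.IsVertex {n : ℕ} (R : Box n) (v : Pt n) : Prop :=
  ∀ i, v i = R.lo i ∨ v i = R.hi i

/-- The (finite) set of vertices of a box. -/
noncomputable def Box.vertices {n : ℕ} (R : Box n) : Finset (Pt n) :=
  Finset.image (fun ε : Fin n → Bool => fun i => if ε i then R.hi i else R.lo i)
    Finset.univ

/-- The sign `(-1)^(m-(n-k))` of a vertex `v` of a `k`-box, where
`m = #{i : v i = lo i}`;  since `m ≥ n - k`, this equals `(-1)^(m+(n-k))`. -/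
noncomputable def Box.sign {n : ℕ} (k : ℕ) (R : Box n) (v : Pt n) : ℤ :=
  (-1) ^ ((Finset.univ.filter (fun i => v i = R.lo i)).card + (n - k))

/-- The multiplicity `m_R(u)` of a point `u` with respect to a `k`-box `R`. -/
noncomputable def Box.mult {n : ℕ} (k : ℕ) (R : Box n) (u : Pt n) : ℤ :=
  if R.IsVertex u then R.sign k u else 0

/-- `V_{A,k}(R) = ∑_{v ∈ ver R} sign_R(v) · A(v)`. -/
noncomputable def Vvol {n : ℕ} (k : ℕ) (A : Pt n → ℝ) (R : Box n) : ℝ :=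
  ∑ v ∈ R.vertices, (R.sign k v : ℝ) * A v

/-- A function is `k`-increasing on `D` if `V_{A,k}(R) ≥ 0` for every `k`-box
with all vertices in `D`. -/
def KIncreasingOn {n : ℕ} (k : ℕ) (D : Set (Pt n)) (A : Pt n → ℝ) : Prop :=
  ∀ R : Box n, R.IsKBox k → (∀ v ∈ R.vertices, v ∈ D) → 0 ≤ Vvol k A R

/-- The multiplicity `m_DU(u)` of a point with respect to a formal (multiset)
disjoint union of `k`-boxes. -/
noncomputable def multDU {n : ℕ} (k : ℕ) (DU : Multiset (Box n)) (u : Pt n) : ℤ :=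
  (DU.map (fun R => R.mult k u)).sum

/-- `DU ∈ R_k(D)`: every box of the multiset `DU` is a `k`-box with all its
vertices in `D`. -/
def memRk {n : ℕ} (k : ℕ) (D : Set (Pt n)) (DU : Multiset (Box n)) : Prop :=
  ∀ R ∈ DU, R.IsKBox k ∧ ∀ v ∈ R.vertices, v ∈ D

/-- `L_k^{(A,B)}(DU) = ∑_{m_DU(u)>0} m_DU(u)·B(u) + ∑_{m_DU(u)<0} m_DU(u)·A(u)`. -/
noncomputable def Lk {n : ℕ} (k : ℕ) (A B : Pt n → ℝ) (DU : Multiset (Box n)) : ℝ :=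
  ∑ u ∈ DU.toFinset.biUnion Box.vertices,
    (if 0 < multDU k DU u then (multDU k DU u : ℝ) * B u
     else if multDU k DU u < 0 then (multDU k DU u : ℝ) * A u else 0)

/-- `P⁻_{k,D}^{(A,B)}(x)`, with the Mathlib convention `sInf ∅ = 0`. -/
noncomputable def Pneg {n : ℕ} (k : ℕ) (D : Set (Pt n)) (A B : Pt n → ℝ) (x : Pt n) : ℝ :=
  sInf {r : ℝ | ∃ DU : Multiset (Box n), memRk k D DU ∧ multDU k DU x < 0 ∧
    r = Lk k A B DU / |(multDU k DU x : ℝ)|}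

/-- `P⁺_{k,D}^{(A,B)}(x)`, with the Mathlib convention `sInf ∅ = 0`. -/
noncomputable def Ppos {n : ℕ} (k : ℕ) (D : Set (Pt n)) (A B : Pt n → ℝ) (x : Pt n) : ℝ :=
  sInf {r : ℝ | ∃ DU : Multiset (Box n), memRk k D DU ∧ 0 < multDU k DU x ∧
    r = Lk k A B DU / |(multDU k DU x : ℝ)|}

/-- `γ_{k,D}^{(A,B)}(x) = min {P⁻_{k,D}^{(A,B)}(x), B(x) - A(x)}`. -/
noncomputable def gammaK {n : ℕ} (k : ℕ) (D : Set (Pt n)) (A B : Pt n → ℝ) (x : Pt n) : ℝ :=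
  min (Pneg k D A B x) (B x - A x)

/-- `δ_{k,D}^{(A,B)}(x) = min {P⁺_{k,D}^{(A,B)}(x), B(x) - A(x)}`. -/
noncomputable def deltaK {n : ℕ} (k : ℕ) (D : Set (Pt n)) (A B : Pt n → ℝ) (x : Pt n) : ℝ :=
  min (Ppos k D A B x) (B x - A x)

/-- A dense countably infinite mesh `D = ∏ δᵢ` in `I^n`. -/
def IsMesh {n : ℕ} (D : Set (Pt n)) : Prop :=
  ∃ δ : Fin n → Set ℝ,
    (∀ i, δ i ⊆ Set.Icc (0:ℝ) 1 ∧ (δ i).Countable ∧ (δ i).Infinite ∧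
      Set.Icc (0:ℝ) 1 ⊆ closure (δ i) ∧ (0:ℝ) ∈ δ i ∧ (1:ℝ) ∈ δ i) ∧
    D = {x : Pt n | ∀ i, x i ∈ δ i}

/-- `A` is grounded: it vanishes whenever some coordinate is `0`. -/
def Grounded {n : ℕ} (A : Pt n → ℝ) : Prop :=
  ∀ x : Pt n, inCube x → (∃ i, x i = 0) → A x = 0

/-- `A` is 1-increasing (increasing in each variable). -/
def OneIncreasing {n : ℕ} (A : Pt n → ℝ) : Prop :=
  ∀ x y : Pt n, inCube x → inCube y → (∀ i, x i ≤ y i) → A x ≤ A y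

/-- `A` has uniform marginals. -/
def UniformMarginals {n : ℕ} (A : Pt n → ℝ) : Prop :=
  ∀ i : Fin n, ∀ t ∈ Set.Icc (0:ℝ) 1, A (Function.update (fun _ => (1:ℝ)) i t) = t

/-- `A` is a standardized function. -/
def Standardized {n : ℕ} (A : Pt n → ℝ) : Prop :=
  Grounded A ∧ OneIncreasing A ∧ A (fun _ => (1:ℝ)) = 1

/-- `A` is a semicopula. -/
def Semicopula {n : ℕ} (A : Pt n → ℝ) : Prop :=
  Grounded A ∧ OneIncreasing A ∧ UniformMarginals A

/-- `A` maps the unit cube into `I = [0,1]`. -/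
def MapsToI {n : ℕ} (A : Pt n → ℝ) : Prop :=
  ∀ x : Pt n, inCube x → A x ∈ Set.Icc (0:ℝ) 1

/-- Condition S: all discontinuities of all sections of `A` lie in the
countable set `S`. -/
def CondS {n : ℕ} (A : Pt n → ℝ) (S : Set ℝ) : Prop :=
  ∀ u : Pt n, inCube u → ∀ i : Fin n, ∀ t ∈ Set.Icc (0:ℝ) 1, t ∉ S →
    ContinuousWithinAt (fun s => A (Function.update u i s)) (Set.Icc (0:ℝ) 1) t

/-- A quasi-copula: a semicopula that is 1-Lipschitz w.r.t. the ℓ¹-norm. -/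
def QuasiCopula {n : ℕ} (A : Pt n → ℝ) : Prop :=
  Semicopula A ∧ ∀ x y : Pt n, inCube x → inCube y → |A x - A y| ≤ ∑ i, |x i - y i|

end KIncr

namespace KIncr

variable {n : ℕ}

lemma mem_vertices_iff {R : Box n} {u : Pt n} : u ∈ R.vertices ↔ R.IsVertex u := by
  constructor
  · intro hu
    rcases Finset.mem_image.1 hu with ⟨ε, -, rfl⟩
    intro i
    by_cases h : ε i
    · right; simp [h]
    · left; simp [h]
  · intro hu
    refine Finset.mem_image.2 ⟨fun i => if u i = R.hi i then true else false,
      Finset.mem_univ _, ?_⟩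
    funext i
    by_cases h' : u i = R.hi i
    · simp [h']
    · rcases hu i with h | h
      · simp only [h]
        have hb : (R.lo i = R.hi i) = False := by
          simp only [eq_iff_iff, iff_false]
          intro he; exact h' (h.trans he)
        simp [hb]
      · exact absurd h h'

lemma vertex_inCube {R : Box n} (hlo : inCube R.lo) (hhi : inCube R.hi)
    {v : Pt n} (hv : v ∈ R.vertices) : inCube v := by
  intro i
  rcases mem_vertices_iff.1 hv i with h | h
  · rw [h]; exact hlo i
  · rw [h]; exact hhi i

lemma mult_eq_sign {k : ℕ} {R : Box n} {u : Pt n} (h : u ∈ R.vertices) :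
    R.mult k u = R.sign k u := if_pos (mem_vertices_iff.1 h)

lemma mult_eq_zero {k : ℕ} {R : Box n} {u : Pt n} (h : u ∉ R.vertices) :
    R.mult k u = 0 := if_neg (fun hv => h (mem_vertices_iff.2 hv))

lemma abs_sign_le_one {k : ℕ} (R : Box n) (u : Pt n) : |(R.sign k u : ℝ)| = 1 := by
  unfold Box.sign
  push_cast
  rw [abs_pow, abs_neg, abs_one, one_pow]

lemma sum_mult_mul {k : ℕ} {R : Box n} {T : Finset (Pt n)} (hT : R.vertices ⊆ T)
    (f : Pt n → ℝ) :
    ∑ u ∈ T, (R.mult k u : ℝ) * f u = Vvol k f R := by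
  rw [show Vvol k f R = ∑ v ∈ R.vertices, (R.mult k v : ℝ) * f v from
    Finset.sum_congr rfl fun u hu => by rw [mult_eq_sign hu]]
  exact (Finset.sum_subset hT fun x _ hx => by
    rw [mult_eq_zero hx, Int.cast_zero, zero_mul]).symm

lemma multDU_cons {k : ℕ} (R : Box n) (m : Multiset (Box n)) (u : Pt n) :
    multDU k (R ::ₘ m) u = R.mult k u + multDU k m u := by
  simp [multDU]

lemma sum_multDU_mul {k : ℕ} (DU : Multiset (Box n)) (T : Finset (Pt n))
    (hT : ∀ R ∈ DU, R.vertices ⊆ T) (f : Pt n → ℝ) :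
    ∑ u ∈ T, (multDU k DU u : ℝ) * f u = (DU.map (fun R => Vvol k f R)).sum := by
  induction DU using Multiset.induction with
  | empty => simp [multDU]
  | cons R m ih =>
    simp only [multDU_cons, Int.cast_add, add_mul, Finset.sum_add_distrib,
      Multiset.map_cons, Multiset.sum_cons]
    rw [ih (fun R' h => hT R' (Multiset.mem_cons_of_mem h)),
      sum_mult_mul (hT R (Multiset.mem_cons_self R m)) f]

lemma mem_biUnion_inCube {k : ℕ} {DU : Multiset (Box n)}
    (hDU : memRk k (cubeSet n) DU) {u : Pt n}
    (hu : u ∈ DU.toFinset.biUnion Box.vertices) : inCube u := by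
  rcases Finset.mem_biUnion.1 hu with ⟨R, hR, hv⟩
  exact (hDU R (Multiset.mem_toFinset.1 hR)).2 u hv

lemma vertices_subset_biUnion {DU : Multiset (Box n)} {R : Box n} (hR : R ∈ DU) :
    R.vertices ⊆ DU.toFinset.biUnion Box.vertices :=
  fun _ hv => Finset.mem_biUnion.2 ⟨R, Multiset.mem_toFinset.2 hR, hv⟩

/-- Comparison with `Lk` for any `A ≤ C ≤ B`. -/
lemma sum_le_Lk {k : ℕ} {A B C : Pt n → ℝ} {DU : Multiset (Box n)}
    (hDU : memRk k (cubeSet n) DU)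
    (hC : ∀ x : Pt n, inCube x → A x ≤ C x ∧ C x ≤ B x) :
    ∑ u ∈ DU.toFinset.biUnion Box.vertices, (multDU k DU u : ℝ) * C u
      ≤ Lk k A B DU := by
  unfold Lk
  refine Finset.sum_le_sum fun u hu => ?_
  have hcube : inCube u := mem_biUnion_inCube hDU hu
  rcases lt_trichotomy (multDU k DU u) 0 with h | h | h
  · rw [if_neg (by omega), if_pos h]
    exact mul_le_mul_of_nonpos_left (hC u hcube).1
      (by exact_mod_cast le_of_lt h)
  · rw [h]; simp
  · rw [if_pos h]
    exact mul_le_mul_of_nonneg_left (hC u hcube).2 (by exact_mod_cast le_of_lt h)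

end KIncr

open KIncr

set_option maxHeartbeats 4000000 in
theorem stmt3 (n k : ℕ) (hn : 1 ≤ n) (hk1 : 1 ≤ k) (hkn : k ≤ n)
    (A B : Pt n → ℝ) (hA : Standardized A) (hB : Standardized B)
    (hAI : MapsToI A) (hBI : MapsToI B)
    (hAB : ∀ x : Pt n, inCube x → A x ≤ B x)
    (S : Set ℝ) (hS : S.Countable) (hSsub : S ⊆ Set.Icc (0:ℝ) 1)
    (hCondS : CondS A S ∨ CondS B S) :
    (∃ C : Pt n → ℝ, MapsToI C ∧ KIncreasingOn k (cubeSet n) C ∧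
        ∀ x : Pt n, inCube x → A x ≤ C x ∧ C x ≤ B x) ↔
    (∀ DU : Multiset (Box n), memRk k (cubeSet n) DU → 0 ≤ Lk k A B DU) := by
  constructor
  · rintro ⟨C, hCI, hCk, hCbd⟩ DU hDU
    have h1 : 0 ≤ (DU.map (fun R => Vvol k C R)).sum := by
      refine Multiset.sum_nonneg fun x hx => ?_
      rcases Multiset.mem_map.1 hx with ⟨R, hR, rfl⟩
      exact hCk R (hDU R hR).1 (hDU R hR).2
    calc (0:ℝ) ≤ (DU.map (fun R => Vvol k C R)).sum := h1
      _ = ∑ u ∈ DU.toFinset.biUnion Box.vertices, (multDU k DU u : ℝ) * C u :=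
          (sum_multDU_mul DU _ (fun R hR => vertices_subset_biUnion hR) C).symm
      _ ≤ Lk k A B DU := sum_le_Lk hDU hCbd
  · intro hL
    classical
    set K : Set (Pt n → ℝ) :=
      Set.univ.pi (fun x => if inCube x then Set.Icc (A x) (B x) else {(0:ℝ)}) with hKdef
    have hKmem : ∀ C ∈ K, ∀ x : Pt n, inCube x → C x ∈ Set.Icc (A x) (B x) := by
      intro C hC x hx
      have := (Set.mem_univ_pi.1 hC) x
      rwa [if_pos hx] at this
    have hKbound : ∀ C ∈ K, ∀ x : Pt n, inCube x → C x ∈ Set.Icc (0:ℝ) 1 := by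
      intro C hC x hx
      exact ⟨le_trans (hAI x hx).1 (hKmem C hC x hx).1,
        le_trans (hKmem C hC x hx).2 (hBI x hx).2⟩
    have hKc : IsCompact K := by
      rw [hKdef]
      refine isCompact_univ_pi fun x => ?_
      by_cases h : inCube x
      · rw [if_pos h]; exact isCompact_Icc
      · rw [if_neg h]; exact isCompact_singleton
    have hKconv : Convex ℝ K := by
      rw [hKdef]
      refine convex_pi fun x _ => ?_
      by_cases h : inCube x
      · rw [if_pos h]; exact convex_Icc _ _
      · rw [if_neg h]; exact convex_singleton _
    have hVcont : ∀ R : Box n, Continuous (fun C : Pt n → ℝ => Vvol k C R) := by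
      intro R
      unfold Vvol
      exact continuous_finset_sum _ fun v _ => continuous_const.mul (continuous_apply v)
    set t : Box n → Set (Pt n → ℝ) :=
      fun R => {C | R.IsKBox k → 0 ≤ Vvol k C R} with htdef
    have htc : ∀ R, IsClosed (t R) := by
      intro R
      by_cases h : R.IsKBox k
      · have he : t R = {C | 0 ≤ Vvol k C R} := by
          ext C; simp [htdef, h]
        rw [he]; exact isClosed_le continuous_const (hVcont R)
      · have he : t R = Set.univ := by
          ext C; simp [htdef, h]
        rw [he]; exact isClosed_univ
    have hfin : ∀ G : Finset (Box n), (K ∩ ⋂ R ∈ G, t R).Nonempty := by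
      intro G
      by_contra hcon
      set G' : Finset (Box n) := G.filter (fun R => R.IsKBox k) with hG'def
      have hG'k : ∀ R ∈ G', R.IsKBox k := fun R hR => (Finset.mem_filter.1 hR).2
      set Ψ : (Pt n → ℝ) →ₗ[ℝ] ({R // R ∈ G'} → ℝ) :=
        { toFun := fun C j => Vvol k C j.1,
          map_add' := by
            intro C C'; funext j
            simp [Vvol, mul_add, Finset.sum_add_distrib]
          map_smul' := by
            intro c C; funext j
            simp [Vvol, Finset.mul_sum, mul_left_comm] } with hPsidef
      have hΨcont : Continuous Ψ := continuous_pi fun j => hVcont j.1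
      have hdisj : Disjoint (Ψ '' K)
          (Set.univ.pi (fun _ : {R // R ∈ G'} => Set.Ici (0:ℝ))) := by
        rw [Set.disjoint_left]
        rintro y ⟨C, hCK, rfl⟩ hyt
        refine hcon ⟨C, hCK, ?_⟩
        refine Set.mem_iInter₂.2 fun R hR => ?_
        intro hRk
        have hjm : R ∈ G' := Finset.mem_filter.2 ⟨hR, hRk⟩
        exact (Set.mem_univ_pi.1 hyt) ⟨R, hjm⟩
      obtain ⟨f, u, v, hfs, huv, hft⟩ :=
        geometric_hahn_banach_compact_closed (hKconv.linear_image Ψ) (hKc.image hΨcont)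
          (convex_pi fun _ _ => convex_Ici 0) (isClosed_set_pi fun _ _ => isClosed_Ici) hdisj
      have hv0 : v < 0 := by
        have h0 : (0 : {R // R ∈ G'} → ℝ) ∈
            Set.univ.pi (fun _ : {R // R ∈ G'} => Set.Ici (0:ℝ)) :=
          Set.mem_univ_pi.2 fun j => by simp
        have := hft 0 h0
        rwa [map_zero] at this
      have hu0 : u < 0 := lt_trans huv hv0
      set lam : {R // R ∈ G'} → ℝ := fun j => f (Pi.single j 1) with hlamdef
      have hlam0 : ∀ j, 0 ≤ lam j := by
        intro j
        by_contra hneg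
        push_neg at hneg
        have hc : (0:ℝ) ≤ (v - 1) / lam j := by
          rw [div_nonneg_iff]; right; constructor <;> linarith
        have hmem : ((v - 1) / lam j) • (Pi.single j (1:ℝ) : {R // R ∈ G'} → ℝ) ∈
            Set.univ.pi (fun _ : {R // R ∈ G'} => Set.Ici (0:ℝ)) := by
          refine Set.mem_univ_pi.2 fun i => ?_
          simp only [Pi.smul_apply, smul_eq_mul, Set.mem_Ici]
          rcases eq_or_ne i j with h | h
          · subst h; rw [Pi.single_eq_same]; linarith
          · rw [Pi.single_eq_of_ne h]; simp
        have h1 := hft _ hmem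
        rw [map_smul, smul_eq_mul] at h1
        have h2 : (v - 1) / lam j * lam j = v - 1 :=
          div_mul_cancel₀ _ (ne_of_lt hneg)
        rw [hlamdef] at h1
        rw [h2] at h1
        linarith
      have hfrep : ∀ y : {R // R ∈ G'} → ℝ, f y = ∑ j, y j * lam j := by
        intro y
        have h1 : ∀ j : {R // R ∈ G'}, y j • (Pi.single j (1:ℝ) : {R // R ∈ G'} → ℝ) = Pi.single j (y j) := by
          intro j
          funext i
          rcases eq_or_ne i j with h | h
          · subst h; simp
          · simp [Pi.single_eq_of_ne h]
        have hy : y = ∑ j, y j • (Pi.single j (1:ℝ) : {R // R ∈ G'} → ℝ) := by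
          simp_rw [h1]
          exact (Finset.univ_sum_single y).symm
        calc f y = f (∑ j, y j • (Pi.single j (1:ℝ) : {R // R ∈ G'} → ℝ)) := by rw [← hy]
          _ = ∑ j, y j * lam j := by
            rw [map_sum]
            exact Finset.sum_congr rfl fun j _ => by rw [map_smul, smul_eq_mul, hlamdef]
      have hVbd : ∀ C ∈ K, ∀ j : {R // R ∈ G'},
          |Vvol k C j.1| ≤ ((j.1.vertices.card : ℝ)) := by
        intro C hCK j
        obtain ⟨hlo, hhi, -, -⟩ := hG'k j.1 j.2
        rw [Vvol]
        refine le_trans (Finset.abs_sum_le_sum_abs _ _) ?_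
        have : ∀ v ∈ j.1.vertices, |(j.1.sign k v : ℝ) * C v| ≤ 1 := by
          intro v hv
          rw [abs_mul, abs_sign_le_one, one_mul]
          have hc := hKbound C hCK v (vertex_inCube hlo hhi hv)
          exact abs_le.2 ⟨by linarith [hc.1], hc.2⟩
        calc ∑ v ∈ j.1.vertices, |(j.1.sign k v : ℝ) * C v| ≤ ∑ _v ∈ j.1.vertices, (1:ℝ) :=
            Finset.sum_le_sum this
          _ = (j.1.vertices.card : ℝ) := by simp
      set M : ℝ := ∑ j : {R // R ∈ G'}, ((j.1.vertices.card : ℝ)) with hMdef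
      have hM0 : 0 ≤ M := by
        rw [hMdef]
        exact Finset.sum_nonneg fun j _ => Nat.cast_nonneg _
      set d : ℕ := ⌈M / (-u)⌉₊ + 1 with hddef
      have hdpos : 0 < (d:ℝ) := by
        rw [hddef]; exact Nat.cast_pos.2 (Nat.succ_pos _)
      have hdM : M + (d:ℝ) * u < 0 := by
        have h1 : M / (-u) ≤ (⌈M / (-u)⌉₊ : ℝ) := Nat.le_ceil _
        have h2 : ((⌈M / (-u)⌉₊ : ℝ)) < (d:ℝ) := by
          rw [hddef]; push_cast; linarith
        have hu' : 0 < -u := by linarith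
        have h3 : M < (d:ℝ) * (-u) := by
          have h4 : M / (-u) < (d:ℝ) := lt_of_le_of_lt h1 h2
          calc M = (M / (-u)) * (-u) := (div_mul_cancel₀ M (ne_of_gt hu')).symm
            _ < (d:ℝ) * (-u) := mul_lt_mul_of_pos_right h4 hu'
        nlinarith
      set N : {R // R ∈ G'} → ℕ := fun j => ⌈lam j * d⌉₊ with hNdef
      have hN1 : ∀ j, lam j * d ≤ (N j : ℝ) := fun j => Nat.le_ceil _
      have hN2 : ∀ j, (N j : ℝ) ≤ lam j * d + 1 := by
        intro j
        rw [hNdef]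
        exact le_of_lt (Nat.ceil_lt_add_one (mul_nonneg (hlam0 j) (le_of_lt hdpos)))
      set DU : Multiset (Box n) :=
        ∑ j : {R // R ∈ G'}, (N j) • ({j.1} : Multiset (Box n)) with hDUdef
      have hDUmem : memRk k (cubeSet n) DU := by
        intro R hR
        rw [hDUdef] at hR
        rcases Multiset.mem_sum.1 hR with ⟨j, -, hj⟩
        have hRj : R = j.1 := Multiset.mem_singleton.1 (Multiset.mem_nsmul.1 hj).2
        subst hRj
        obtain ⟨hlo, hhi, h3, h4⟩ := hG'k _ j.2
        exact ⟨⟨hlo, hhi, h3, h4⟩, fun v hv => vertex_inCube hlo hhi hv⟩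
      set xh : Pt n → ℝ := fun p => if inCube p then
          (if 0 < multDU k DU p then B p else A p) else 0 with hxhdef
      have hxhK : xh ∈ K := by
        rw [hKdef]
        refine Set.mem_univ_pi.2 fun x => ?_
        by_cases h : inCube x
        · rw [if_pos h, hxhdef]
          simp only
          rw [if_pos h]
          by_cases h2 : 0 < multDU k DU x
          · rw [if_pos h2]; exact ⟨hAB x h, le_refl _⟩
          · rw [if_neg h2]; exact ⟨le_refl _, hAB x h⟩
        · rw [if_neg h, hxhdef]
          simp only
          rw [if_neg h]
          rfl
      have hLkDU : Lk k A B DU = ∑ j, (N j : ℝ) * Vvol k xh j.1 := by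
        have hstep1 : Lk k A B DU =
            ∑ u ∈ DU.toFinset.biUnion Box.vertices, (multDU k DU u : ℝ) * xh u := by
          unfold Lk
          refine Finset.sum_congr rfl fun p hp => ?_
          have hcube : inCube p := mem_biUnion_inCube hDUmem hp
          have hxp : xh p = if 0 < multDU k DU p then B p else A p := by
            rw [hxhdef]; simp only; rw [if_pos hcube]
          rcases lt_trichotomy (multDU k DU p) 0 with h | h | h
          · rw [if_neg (by omega), if_pos h, hxp, if_neg (by omega)]
          · rw [h]; simp
          · rw [if_pos h, hxp, if_pos h]
        rw [hstep1, sum_multDU_mul DU _ (fun R hR => vertices_subset_biUnion hR) xh]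
        rw [hDUdef]
        let F : Multiset (Box n) →+ ℝ :=
          { toFun := fun m => (m.map (fun R => Vvol k xh R)).sum,
            map_zero' := by simp,
            map_add' := fun a b => by simp }
        have hF : ∀ m : Multiset (Box n),
            (m.map (fun R => Vvol k xh R)).sum = F m := fun m => rfl
        rw [hF, map_sum]
        refine Finset.sum_congr rfl fun j _ => ?_
        rw [map_nsmul, ← hF]
        simp [nsmul_eq_mul]
      have hsum_lt : ∑ j, (N j : ℝ) * Vvol k xh j.1 < 0 := by
        have hxs : f (Ψ xh) < u := hfs _ ⟨xh, hxhK, rfl⟩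
        have hxrep : f (Ψ xh) = ∑ j, Vvol k xh j.1 * lam j := by
          rw [hfrep]
          rfl
        have hflt : ∑ j, Vvol k xh j.1 * lam j < u := by
          rw [← hxrep]; exact hxs
        have hterm : ∀ j : {R // R ∈ G'}, (N j : ℝ) * Vvol k xh j.1
            ≤ ((j.1.vertices.card : ℝ)) + (d:ℝ) * (Vvol k xh j.1 * lam j) := by
          intro j
          have ha0 : 0 ≤ (N j : ℝ) - lam j * d := by linarith [hN1 j]
          have ha1 : (N j : ℝ) - lam j * d ≤ 1 := by linarith [hN2 j]
          have hb := hVbd xh hxhK j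
          have h1 : ((N j : ℝ) - lam j * d) * Vvol k xh j.1
              ≤ ((j.1.vertices.card : ℝ)) := by
            calc ((N j : ℝ) - lam j * d) * Vvol k xh j.1
                ≤ ((N j : ℝ) - lam j * d) * |Vvol k xh j.1| :=
                  mul_le_mul_of_nonneg_left (le_abs_self _) ha0
              _ ≤ 1 * ((j.1.vertices.card : ℝ)) :=
                  mul_le_mul ha1 hb (abs_nonneg _) zero_le_one
              _ = ((j.1.vertices.card : ℝ)) := one_mul _
          nlinarith [h1]
        have hsum1 : ∑ j, (N j:ℝ) * Vvol k xh j.1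
            ≤ M + (d:ℝ) * (∑ j, Vvol k xh j.1 * lam j) := by
          calc ∑ j, (N j:ℝ) * Vvol k xh j.1
              ≤ ∑ j, (((j.1.vertices.card : ℝ)) + (d:ℝ) * (Vvol k xh j.1 * lam j)) :=
                Finset.sum_le_sum fun j _ => hterm j
            _ = M + (d:ℝ) * (∑ j, Vvol k xh j.1 * lam j) := by
                rw [Finset.sum_add_distrib, ← Finset.mul_sum, hMdef]
        have hfin2 : (d:ℝ) * (∑ j, Vvol k xh j.1 * lam j) < (d:ℝ) * u :=
          mul_lt_mul_of_pos_left hflt hdpos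
        linarith
      have hcontra := hL DU hDUmem
      rw [hLkDU] at hcontra
      linarith
    obtain ⟨C, hCK, hCt⟩ := hKc.inter_iInter_nonempty t htc hfin
    refine ⟨C, fun x hx => hKbound C hCK x hx, ?_, fun x hx => hKmem C hCK x hx⟩
    intro R hRk _
    exact Set.mem_iInter.1 hCt R hRk
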